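/- Let $y_1, \ldots, y_m$ be a finite real sequence such that both $(y_k)$ and $(\Delta y_k)$ are increasing. Let $J = [a,b)$ and $I = [c,d)$ be intervals with $b \le c$ and $J \subset [y_1, y_m)$. Then $\frac{\#\{k : y_k \in I\} - 1}{d - c} \le \frac{\#\{k : y_k \in J\} + 1}{b - a}$. -/

import Mathlib

/-- Lemma 3 (L7): comparison of counts in two half-open intervals for a sequence
with increasing values and increasing first differences. -/
theorem count_compare (m : ℕ) (y : ℕ → ℝ) (a b c d : ℝ)
    (hy : MonotoneOn y (Set.Icc 1 m))
    (hΔ : MonotoneOn (fun k => y (k + 1) - y k) (Set.Icc 1 (m - 1)))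
    (hab : a < b) (hbc : b ≤ c) (hcd : c < d)
    (hJ : y 1 ≤ a) (hJ' : b ≤ y m) :
    ((((Finset.Icc 1 m).filter fun k => y k ∈ Set.Ico c d).card : ℝ) - 1) / (d - c) ≤
      ((((Finset.Icc 1 m).filter fun k => y k ∈ Set.Ico a b).card : ℝ) + 1) / (b - a) := by
  classical
  have hdc : (0:ℝ) < d - c := sub_pos.2 hcd
  have hba : (0:ℝ) < b - a := sub_pos.2 hab
  set SI := (Finset.Icc 1 m).filter (fun k => y k ∈ Set.Ico c d) with hSIdef
  set SJ := (Finset.Icc 1 m).filter (fun k => y k ∈ Set.Ico a b) with hSJdef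
  by_cases hcard : SI.card ≤ 1
  · refine le_trans (b := (0:ℝ)) ?_ ?_
    · apply div_nonpos_of_nonpos_of_nonneg _ hdc.le
      have : (SI.card : ℝ) ≤ 1 := by exact_mod_cast hcard
      linarith
    · positivity
  push_neg at hcard
  have hne : SI.Nonempty := Finset.card_pos.mp (by omega)
  set p := SI.min' hne with hp
  set q := SI.max' hne with hq
  have hpmem : p ∈ SI := SI.min'_mem hne
  have hqmem : q ∈ SI := SI.max'_mem hne
  have hpq : p ≤ q := SI.min'_le q (SI.max'_mem hne)
  simp only [hSIdef, Finset.mem_filter, Finset.mem_Icc, Set.mem_Ico] at hpmem hqmem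
  obtain ⟨⟨hp1, hpm⟩, hcp, hpd⟩ := hpmem
  obtain ⟨⟨hq1, hqm⟩, hcq, hqd⟩ := hqmem
  -- card SI ≤ q - p + 1
  have hsub : SI ⊆ Finset.Icc p q := by
    intro k hk
    simp only [Finset.mem_Icc]
    exact ⟨SI.min'_le k hk, SI.le_max' k hk⟩
  have hcard_le : SI.card ≤ q - p + 1 := by
    have := Finset.card_le_card hsub
    rwa [Nat.card_Icc, Nat.sub_add_comm hpq] at this
  have hqp1 : 1 ≤ q - p := by omega
  have hypq : y p ≤ y q := hy ⟨hp1, hpm⟩ ⟨hq1, hqm⟩ hpq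
  -- For 1 ≤ k < p : (q - p) * Δy k ≤ y q - y p
  have gap_bound : ∀ k, 1 ≤ k → k < p → ((q - p : ℕ) : ℝ) * (y (k+1) - y k) ≤ y q - y p := by
    intro k hk1 hkp
    have htel : (∑ j ∈ Finset.Ico p q, (y (j+1) - y j)) = y q - y p := by
      rw [Finset.sum_Ico_eq_sub _ hpq, Finset.sum_range_sub, Finset.sum_range_sub]; ring
    have hbound : ∀ j ∈ Finset.Ico p q, y (k+1) - y k ≤ y (j+1) - y j := by
      intro j hj
      rw [Finset.mem_Ico] at hj
      exact hΔ ⟨hk1, by omega⟩ ⟨by omega, by omega⟩ (by omega)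
    calc ((q - p : ℕ) : ℝ) * (y (k+1) - y k)
        = (Finset.Ico p q).card • (y (k+1) - y k) := by
          rw [Nat.card_Ico, nsmul_eq_mul]
      _ ≤ ∑ j ∈ Finset.Ico p q, (y (j+1) - y j) := Finset.card_nsmul_le_sum _ _ _ hbound
      _ = y q - y p := htel
  -- r : largest k ≤ p with y k < b
  set r := Nat.findGreatest (fun k => y k < b) p with hrdef
  have hy1b : y 1 < b := lt_of_le_of_lt hJ hab
  have hr1 : 1 ≤ r := Nat.le_findGreatest hp1 hy1b
  have hrp : r ≤ p := Nat.findGreatest_le p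
  have hyrb : y r < b := by
    have := Nat.findGreatest_spec (P := fun k => y k < b) hp1 hy1b
    simpa [hrdef] using this
  have hrp' : r < p := by
    rcases lt_or_eq_of_le hrp with h | h
    · exact h
    · exfalso; rw [h] at hyrb; exact absurd hyrb (not_lt.2 (hbc.trans hcp))
  have hyr1b : b ≤ y (r+1) := by
    have := Nat.findGreatest_is_greatest (P := fun k => y k < b) (n := p)
      (k := r+1) (by omega) (by omega)
    simpa using not_lt.1 this
  -- s : largest k ≤ r with y k ≤ a
  set s := Nat.findGreatest (fun k => y k ≤ a) r with hsdef
  have hs1 : 1 ≤ s := Nat.le_findGreatest hr1 hJ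
  have hsr : s ≤ r := Nat.findGreatest_le r
  have hysa : y s ≤ a := by
    have := Nat.findGreatest_spec (P := fun k => y k ≤ a) hr1 hJ
    simpa [hsdef] using this
  have hsgt : ∀ k, s < k → k ≤ r → a < y k := by
    intro k hk hkr
    have := Nat.findGreatest_is_greatest (P := fun k => y k ≤ a) (n := r) (k := k) hk hkr
    simpa using not_le.1 this
  -- Ioc s r ⊆ SJ
  have hIoc : Finset.Ioc s r ⊆ SJ := by
    intro k hk
    rw [Finset.mem_Ioc] at hk
    simp only [hSJdef, Finset.mem_filter, Finset.mem_Icc, Set.mem_Ico]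
    refine ⟨⟨by omega, by omega⟩, (hsgt k hk.1 hk.2).le, ?_⟩
    calc y k ≤ y r := hy ⟨by omega, by omega⟩ ⟨by omega, by omega⟩ hk.2
      _ < b := hyrb
  have hSJcard : r - s ≤ SJ.card := by
    have := Finset.card_le_card hIoc
    rwa [Nat.card_Ioc] at this
  -- telescoping sum bound over [s, r]
  have htel2 : (∑ k ∈ Finset.Ico s (r+1), (y (k+1) - y k)) = y (r+1) - y s := by
    rw [Finset.sum_Ico_eq_sub _ (by omega : s ≤ r+1), Finset.sum_range_sub, Finset.sum_range_sub]; ring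
  have key : ((q - p : ℕ) : ℝ) * (b - a) ≤ ((r + 1 - s : ℕ) : ℝ) * (y q - y p) := by
    have h1 : b - a ≤ y (r+1) - y s := by linarith
    have h2 : ((q - p : ℕ) : ℝ) * (y (r+1) - y s)
        = ∑ k ∈ Finset.Ico s (r+1), ((q - p : ℕ) : ℝ) * (y (k+1) - y k) := by
      rw [← Finset.mul_sum, htel2]
    have h3 : (∑ k ∈ Finset.Ico s (r+1), ((q - p : ℕ) : ℝ) * (y (k+1) - y k))
        ≤ ∑ k ∈ Finset.Ico s (r+1), (y q - y p) := by
      apply Finset.sum_le_sum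
      intro k hk
      rw [Finset.mem_Ico] at hk
      exact gap_bound k (by omega) (by omega)
    have h4 : (∑ k ∈ Finset.Ico s (r+1), (y q - y p)) = ((r + 1 - s : ℕ) : ℝ) * (y q - y p) := by
      rw [Finset.sum_const, Nat.card_Ico, nsmul_eq_mul]
    have hqpnn : (0:ℝ) ≤ ((q - p : ℕ) : ℝ) := Nat.cast_nonneg _
    calc ((q - p : ℕ) : ℝ) * (b - a) ≤ ((q - p : ℕ) : ℝ) * (y (r+1) - y s) :=
          mul_le_mul_of_nonneg_left h1 hqpnn
      _ = _ := h2
      _ ≤ _ := h3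
      _ = _ := h4
  -- assemble
  rw [div_le_div_iff₀ hdc hba]
  have hqp_pos : (0:ℝ) < ((q - p : ℕ) : ℝ) := by exact_mod_cast Nat.lt_of_lt_of_le Nat.zero_lt_one hqp1
  have hNI : ((SI.card : ℝ) - 1) ≤ ((q - p : ℕ) : ℝ) := by
    have : (SI.card : ℝ) ≤ ((q - p : ℕ) : ℝ) + 1 := by exact_mod_cast hcard_le
    linarith
  have hNI0 : (1:ℝ) ≤ (SI.card : ℝ) - 1 := by
    have : (2:ℝ) ≤ (SI.card : ℝ) := by exact_mod_cast hcard
    linarith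
  have hNJ : ((r + 1 - s : ℕ) : ℝ) ≤ (SJ.card : ℝ) + 1 := by
    have h5 : (r + 1 - s : ℕ) = (r - s) + 1 := by omega
    have h6 : ((r - s : ℕ) : ℝ) ≤ (SJ.card : ℝ) := by exact_mod_cast hSJcard
    rw [h5]; push_cast; linarith
  have hypqd : y q - y p ≤ d - c := by linarith
  -- (SI.card - 1) * (y q - y p) ≤ (q-p) * (d - c)
  have hA : ((SI.card : ℝ) - 1) * (y q - y p) ≤ ((q - p : ℕ) : ℝ) * (d - c) := by
    calc ((SI.card : ℝ) - 1) * (y q - y p) ≤ ((q - p : ℕ) : ℝ) * (y q - y p) :=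
          mul_le_mul_of_nonneg_right hNI (by linarith)
      _ ≤ ((q - p : ℕ) : ℝ) * (d - c) := mul_le_mul_of_nonneg_left hypqd hqp_pos.le
  -- key gives (q-p)*(b-a) ≤ (SJ.card+1)*(y q - y p)
  have hB : ((q - p : ℕ) : ℝ) * (b - a) ≤ ((SJ.card : ℝ) + 1) * (y q - y p) := by
    calc ((q - p : ℕ) : ℝ) * (b - a) ≤ ((r + 1 - s : ℕ) : ℝ) * (y q - y p) := key
      _ ≤ ((SJ.card : ℝ) + 1) * (y q - y p) := mul_le_mul_of_nonneg_right hNJ (by linarith)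
  -- combine: multiply hB by (SI.card - 1) ≥ 1 > 0 and hA by (SJ.card + 1) > 0
  have hfin : ((q - p : ℕ) : ℝ) * (((SI.card : ℝ) - 1) * (b - a))
      ≤ ((q - p : ℕ) : ℝ) * (((SJ.card : ℝ) + 1) * (d - c)) := by
    have t1 := mul_le_mul_of_nonneg_left hB (by linarith : (0:ℝ) ≤ (SI.card : ℝ) - 1)
    have t2 := mul_le_mul_of_nonneg_left hA (by positivity : (0:ℝ) ≤ (SJ.card : ℝ) + 1)
    ring_nf at t1 t2 ⊢
    linarith
  have := (mul_le_mul_iff_right₀ hqp_pos).mp hfin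
  linarith
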